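/- For the diagonal stabilization s^E(u,v) = α^E ∑ᵢ u(xᵢ)·v(xᵢ) with α^E > 0, the VEM stiffness matrix K_h^E = |E| W_C D W_Cᵀ + α^E (I - P_P)ᵀ(I - P_P) is symmetric positive semidefinite, and its kernel equals the column space of N_R (the nodal representations of rigid body motions), provided D is positive definite and P_P = N_R W_Rᵀ + N_C W_Cᵀ is a projection onto the column space of [N_R, N_C] with W_CᵀN_R = 0, W_CᵀN_C = I. -/

import Mathlib

open Matrix

private lemma psd_smul {m : ℕ} {c : ℝ} (hc : 0 ≤ c)
    {M : Matrix (Fin m) (Fin m) ℝ} (hM : M.PosSemidef) : (c • M).PosSemidef := by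
  refine ⟨?_, fun x => ?_⟩
  · have h := hM.1.eq
    rw [conjTranspose_eq_transpose_of_trivial] at h
    unfold Matrix.IsHermitian
    rw [conjTranspose_smul, conjTranspose_eq_transpose_of_trivial, h, star_trivial]
  · have := hM.2 x
    have h : (x.sum fun i xi ↦ x.sum fun j xj ↦ star xi * (c • M) i j * xj)
        = c * (x.sum fun i xi ↦ x.sum fun j xj ↦ star xi * M i j * xj) := by
      simp only [Finsupp.sum, Finset.mul_sum, Matrix.smul_apply, smul_eq_mul]
      exact Finset.sum_congr rfl fun _ _ => Finset.sum_congr rfl fun _ _ => by ring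
    rw [h]
    exact mul_nonneg hc this

/-- with the diagonal stabilization, the VEM stiffness matrix
K_h^E = |E| W_C D W_Cᵀ + α^E (I − P_P)ᵀ(I − P_P) is symmetric positive
semidefinite and its kernel is exactly the column space of N_R (the nodal
rigid body motions), given the duality relations making
P_P = N_R W_Rᵀ + N_C W_Cᵀ a projection onto the column space of [N_R, N_C]. -/
theorem stmt16 {n : ℕ}
    (NR NC WR WC : Matrix (Fin (3 * n)) (Fin 6) ℝ)
    (D : Matrix (Fin 6) (Fin 6) ℝ) (hD : D.PosDef)
    (volE αE : ℝ) (hvol : 0 < volE) (hα : 0 < αE)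
    (hWRNR : WRᵀ * NR = 1) (hWRNC : WRᵀ * NC = 0)
    (hWCNR : WCᵀ * NR = 0) (hWCNC : WCᵀ * NC = 1)
    (K : Matrix (Fin (3 * n)) (Fin (3 * n)) ℝ)
    (hK : K = volE • (WC * D * WCᵀ) +
      αE • ((1 - (NR * WRᵀ + NC * WCᵀ))ᵀ * (1 - (NR * WRᵀ + NC * WCᵀ)))) :
    K.PosSemidef ∧ ∀ x : Fin (3 * n) → ℝ,
      (K.mulVec x = 0 ↔ ∃ y : Fin 6 → ℝ, x = NR.mulVec y) := by
  set P : Matrix (Fin (3 * n)) (Fin (3 * n)) ℝ := NR * WRᵀ + NC * WCᵀ with hP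
  have hPSD1 : (WC * D * WCᵀ).PosSemidef := by
    have h := hD.posSemidef.mul_mul_conjTranspose_same WC
    rwa [conjTranspose_eq_transpose_of_trivial] at h
  have hPSD2 : ((1 - P)ᵀ * (1 - P)).PosSemidef := by
    have h := posSemidef_conjTranspose_mul_self (1 - P)
    rwa [conjTranspose_eq_transpose_of_trivial] at h
  have hKpsd : K.PosSemidef := by
    rw [hK]
    exact (psd_smul hvol.le hPSD1).add (psd_smul hα.le hPSD2)
  refine ⟨hKpsd, fun x => ?_⟩
  constructor
  · intro hx
    -- quadratic form vanishes
    have hq : x ⬝ᵥ K *ᵥ x = 0 := by rw [hx, dotProduct_zero]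
    have hq1 : x ⬝ᵥ (WC * D * WCᵀ) *ᵥ x = (WCᵀ *ᵥ x) ⬝ᵥ D *ᵥ (WCᵀ *ᵥ x) := by
      rw [← mulVec_mulVec, ← mulVec_mulVec, dotProduct_mulVec, ← mulVec_transpose]
    have hq2 : x ⬝ᵥ ((1 - P)ᵀ * (1 - P)) *ᵥ x = ((1 - P) *ᵥ x) ⬝ᵥ ((1 - P) *ᵥ x) := by
      rw [← mulVec_mulVec, dotProduct_mulVec, ← mulVec_transpose, transpose_transpose]
    have hq' : volE * ((WCᵀ *ᵥ x) ⬝ᵥ D *ᵥ (WCᵀ *ᵥ x))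
        + αE * (((1 - P) *ᵥ x) ⬝ᵥ ((1 - P) *ᵥ x)) = 0 := by
      rw [← hq1, ← hq2]
      have : x ⬝ᵥ K *ᵥ x
          = volE * (x ⬝ᵥ (WC * D * WCᵀ) *ᵥ x)
            + αE * (x ⬝ᵥ ((1 - P)ᵀ * (1 - P)) *ᵥ x) := by
        rw [hK]
        simp [add_mulVec, smul_mulVec, dotProduct_add, dotProduct_smul]
      rw [← this, hq]
    have h1nn : 0 ≤ (WCᵀ *ᵥ x) ⬝ᵥ D *ᵥ (WCᵀ *ᵥ x) := by
      have := hD.posSemidef.dotProduct_mulVec_nonneg (WCᵀ *ᵥ x)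
      simpa using this
    have h2nn : 0 ≤ ((1 - P) *ᵥ x) ⬝ᵥ ((1 - P) *ᵥ x) := by simpa using dotProduct_self_star_nonneg ((1 - P) *ᵥ x)
    have hz1 : (WCᵀ *ᵥ x) ⬝ᵥ D *ᵥ (WCᵀ *ᵥ x) = 0 := by
      nlinarith [mul_nonneg hvol.le h1nn, mul_nonneg hα.le h2nn]
    have hz2 : ((1 - P) *ᵥ x) ⬝ᵥ ((1 - P) *ᵥ x) = 0 := by
      nlinarith [mul_nonneg hvol.le h1nn, mul_nonneg hα.le h2nn]
    -- D positive definite forces WCᵀ x = 0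
    have hWCx : WCᵀ *ᵥ x = 0 := by
      by_contra h
      have := hD.dotProduct_mulVec_pos h
      simp only [star_trivial] at this
      linarith [this, hz1.ge]
    have hQx : (1 - P) *ᵥ x = 0 := dotProduct_self_eq_zero.mp hz2
    have hxP : x = P *ᵥ x := by
      have := hQx
      rw [sub_mulVec, one_mulVec, sub_eq_zero] at this
      exact this
    refine ⟨WRᵀ *ᵥ x, ?_⟩
    calc x = P *ᵥ x := hxP
    _ = NR *ᵥ (WRᵀ *ᵥ x) + NC *ᵥ (WCᵀ *ᵥ x) := by
        rw [hP, add_mulVec, mulVec_mulVec, mulVec_mulVec]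
    _ = NR *ᵥ (WRᵀ *ᵥ x) := by rw [hWCx, mulVec_zero, add_zero]
  · rintro ⟨y, rfl⟩
    have hWCx : WCᵀ *ᵥ NR *ᵥ y = 0 := by
      rw [mulVec_mulVec, hWCNR, zero_mulVec]
    have hQx : (1 - P) *ᵥ NR *ᵥ y = 0 := by
      rw [sub_mulVec, one_mulVec, hP, add_mulVec, mulVec_mulVec, mulVec_mulVec]
      rw [Matrix.mul_assoc NR WRᵀ NR, hWRNR, Matrix.mul_one,
        Matrix.mul_assoc NC WCᵀ NR, hWCNR, Matrix.mul_zero]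
      simp
    rw [hK]
    rw [add_mulVec, smul_mulVec, smul_mulVec,
      ← mulVec_mulVec, ← mulVec_mulVec, hWCx, mulVec_zero, mulVec_zero, smul_zero,
      ← mulVec_mulVec, hQx, mulVec_zero, smul_zero, add_zero]
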